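/- Let (A, r) be a co-quasitriangular Hopf algebra over a field and let Y be an invertible functional on A (an invertible element of the dual algebra) such that r(φ,ψ) = Y^{−1}(φ_1) Y^{−1}(ψ_1) Y(φ_2ψ_2) for all φ,ψ ∈ A. Then the map ι_Y : A → {}^R A, φ ↦ Y(φ_1) φ_2, is an isomorphism of algebras, where {}^R A denotes A equipped with the twisted product φ •_R ψ = r(φ_1,ψ_1)φ_2ψ_2. In particular, for A = O_q[G] and Y = C T_{w_0} the element of the quantum Weyl group completion satisfying r = (Y^{−1}⊗Y^{−1})Δ(Y), the map ι_Y : O_q[G] → {}^R O_q[G] is an algebra isomorphism. -/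

import Mathlib

/-!
# Statement 13

Let `(A, r)` be a co-quasitriangular Hopf algebra over a field and let `Y` be an invertible
functional on `A` (invertible in the convolution algebra `A →ₗ k`) such that
`r(φ,ψ) = Y⁻¹(φ₁) Y⁻¹(ψ₁) Y(φ₂ψ₂)` for all `φ, ψ ∈ A`.  Then the map
`ι_Y : A → {}^R A`, `φ ↦ Y(φ₁) φ₂`, is an isomorphism of algebras, where `{}^R A` is `A`
equipped with the twisted product `φ •_R ψ = r(φ₁,ψ₁) φ₂ ψ₂`.

(In the paper this is applied to `A = O_q[G]` and `Y = C T_{w₀}`, the normalized longest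
element of the quantum Weyl group, which satisfies the Kirillov–Reshetikhin cocycle identity
`r = (Y⁻¹ ⊗ Y⁻¹) Δ(Y)`; the conclusion is that `ι_Y : O_q[G] → {}^R O_q[G]` is an algebra
isomorphism.)

"Isomorphism of algebras" is rendered as: `ι_Y` is bijective, multiplicative from the product
of `A` to the twisted product `•_R`, and unital.
-/

open TensorProduct

noncomputable section

universe u

variable {k : Type u} [Field k] {A : Type u} [Ring A] [HopfAlgebra k A]

/-- The twisted product `φ •_R ψ = r(φ₁, ψ₁) φ₂ ψ₂`, as a linear map `A ⊗ A → A`. -/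
def mulRTwist (r : A ⊗[k] A →ₗ[k] k) : A ⊗[k] A →ₗ[k] A :=
  (TensorProduct.lid k A).toLinearMap
    ∘ₗ TensorProduct.map r (LinearMap.mul' k A)
    ∘ₗ (TensorProduct.tensorTensorTensorComm k A A A A).toLinearMap
    ∘ₗ TensorProduct.map (Coalgebra.comul (R := k)) (Coalgebra.comul (R := k))

/-- The map `φ ⊗ ψ ↦ ψ₁ φ₁ r(φ₂, ψ₂)`. -/
def mulRTwist' (r : A ⊗[k] A →ₗ[k] k) : A ⊗[k] A →ₗ[k] A :=
  (TensorProduct.rid k A).toLinearMap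
    ∘ₗ TensorProduct.map
        (LinearMap.mul' k A ∘ₗ (TensorProduct.comm k A A).toLinearMap) r
    ∘ₗ (TensorProduct.tensorTensorTensorComm k A A A A).toLinearMap
    ∘ₗ TensorProduct.map (Coalgebra.comul (R := k)) (Coalgebra.comul (R := k))

/-- Convolution product of two functionals on the coalgebra `A ⊗[k] A`. -/
def convAA (f g : A ⊗[k] A →ₗ[k] k) : A ⊗[k] A →ₗ[k] k :=
  LinearMap.mul' k k ∘ₗ TensorProduct.map f g
    ∘ₗ (Coalgebra.comul (R := k) (A := A ⊗[k] A))

/-- Convolution product of two functionals on `A`. -/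
def convA (f g : A →ₗ[k] k) : A →ₗ[k] k :=
  LinearMap.mul' k k ∘ₗ TensorProduct.map f g ∘ₗ (Coalgebra.comul (R := k) (A := A))

/-- The map `ι_Y : φ ↦ Y(φ₁) φ₂`. -/
def iotaY (Y : A →ₗ[k] k) : A →ₗ[k] A :=
  (TensorProduct.lid k A).toLinearMap ∘ₗ TensorProduct.map Y LinearMap.id
    ∘ₗ (Coalgebra.comul (R := k) (A := A))

/-- The functional `φ ⊗ ψ ↦ Y⁻¹(φ₁) Y⁻¹(ψ₁) Y(φ₂ ψ₂)`, i.e. `(Y⁻¹ ⊗ Y⁻¹) Δ(Y)`. -/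
def cocycleRHS (Y Yinv : A →ₗ[k] k) : A ⊗[k] A →ₗ[k] k :=
  LinearMap.mul' k k
    ∘ₗ TensorProduct.map (LinearMap.mul' k k ∘ₗ TensorProduct.map Yinv Yinv)
        (Y ∘ₗ LinearMap.mul' k A)
    ∘ₗ (TensorProduct.tensorTensorTensorComm k A A A A).toLinearMap
    ∘ₗ TensorProduct.map (Coalgebra.comul (R := k)) (Coalgebra.comul (R := k))

lemma aux1 (f : A →ₗ[k] k) :
    Coalgebra.comul (R := k) ∘ₗ (TensorProduct.lid k A).toLinearMap
        ∘ₗ TensorProduct.map f LinearMap.id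
      = (TensorProduct.lid k (A ⊗[k] A)).toLinearMap
        ∘ₗ TensorProduct.map f (Coalgebra.comul (R := k)) := by
  ext a b
  simp

lemma aux2 (f : A →ₗ[k] k) :
    (TensorProduct.lid k (A ⊗[k] A)).toLinearMap
        ∘ₗ TensorProduct.map f (LinearMap.id (M := A ⊗[k] A))
        ∘ₗ (TensorProduct.assoc k A A A).toLinearMap
      = TensorProduct.map ((TensorProduct.lid k A).toLinearMap
          ∘ₗ TensorProduct.map f LinearMap.id) LinearMap.id := by
  ext a b c
  simp [TensorProduct.smul_tmul']

lemma comul_comp_iotaY (f : A →ₗ[k] k) :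
    Coalgebra.comul (R := k) ∘ₗ iotaY f
      = TensorProduct.map (iotaY f) LinearMap.id ∘ₗ Coalgebra.comul (R := k) := by
  apply LinearMap.ext
  intro a
  simp only [iotaY, LinearMap.comp_apply]
  have h1 := LinearMap.congr_fun (aux1 (A := A) f) (Coalgebra.comul (R := k) a)
  simp only [LinearMap.comp_apply, LinearEquiv.coe_coe] at h1 ⊢
  rw [h1]
  have hco : TensorProduct.map f (Coalgebra.comul (R := k))
        (Coalgebra.comul (R := k) a)
      = TensorProduct.map f (LinearMap.id (M := A ⊗[k] A))
          ((TensorProduct.assoc k A A A)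
            ((Coalgebra.comul (R := k)).rTensor A (Coalgebra.comul a))) := by
    rw [Coalgebra.coassoc_apply]
    have : TensorProduct.map f (Coalgebra.comul (R := k))
        = TensorProduct.map f (LinearMap.id (M := A ⊗[k] A))
          ∘ₗ (Coalgebra.comul (R := k)).lTensor A := by
      ext a b; simp
    rw [this]; rfl
  rw [hco]
  have h2 := LinearMap.congr_fun (aux2 (A := A) f)
    ((Coalgebra.comul (R := k)).rTensor A (Coalgebra.comul a))
  simp only [LinearMap.comp_apply, LinearEquiv.coe_coe] at h2
  refine h2.trans ?_
  have : (Coalgebra.comul (R := k)).rTensor A (Coalgebra.comul a)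
      = TensorProduct.map (Coalgebra.comul (R := k)) LinearMap.id (Coalgebra.comul a) := rfl
  rw [this, ← LinearMap.comp_apply, ← TensorProduct.map_comp]
  rfl

lemma iotaY_comp (f g : A →ₗ[k] k) :
    iotaY f ∘ₗ iotaY g = iotaY (convA g f) := by
  have : iotaY f ∘ₗ iotaY g
      = (TensorProduct.lid k A).toLinearMap ∘ₗ TensorProduct.map f LinearMap.id
        ∘ₗ TensorProduct.map (iotaY g) LinearMap.id ∘ₗ Coalgebra.comul (R := k) := by
    conv_lhs => rw [iotaY]
    rw [LinearMap.comp_assoc, LinearMap.comp_assoc, comul_comp_iotaY]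
  rw [this]
  have h4 : TensorProduct.map f (LinearMap.id (M := A))
        ∘ₗ (TensorProduct.map (iotaY g) LinearMap.id ∘ₗ Coalgebra.comul (R := k))
      = TensorProduct.map (f ∘ₗ iotaY g) LinearMap.id ∘ₗ Coalgebra.comul (R := k) := by
    rw [← LinearMap.comp_assoc, ← TensorProduct.map_comp, LinearMap.id_comp]
  rw [h4]
  have hfg : f ∘ₗ iotaY g = convA g f := by
    apply LinearMap.ext; intro a
    simp only [convA, iotaY, LinearMap.comp_apply, LinearEquiv.coe_coe]
    have : ∀ t : A ⊗[k] A,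
        f ((TensorProduct.lid k A) (TensorProduct.map g LinearMap.id t))
          = LinearMap.mul' k k (TensorProduct.map g f t) := by
      intro t
      induction t using TensorProduct.induction_on with
      | zero => simp
      | tmul a b => simp [LinearMap.mul'_apply, smul_eq_mul]
      | add x y hx hy => simp [map_add, hx, hy]
    exact this _
  rw [hfg]; rfl

lemma iotaY_counit : iotaY (Coalgebra.counit (R := k) (A := A)) = LinearMap.id := by
  rw [iotaY]
  have : TensorProduct.map (Coalgebra.counit (R := k) (A := A)) (LinearMap.id (M := A))
      = (Coalgebra.counit (R := k)).rTensor A := rfl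
  rw [this, Coalgebra.rTensor_counit_comp_comul]
  ext a; simp

lemma comp_iotaY (f g : A →ₗ[k] k) : f ∘ₗ iotaY g = convA g f := by
  apply LinearMap.ext; intro a
  simp only [convA, iotaY, LinearMap.comp_apply, LinearEquiv.coe_coe]
  have : ∀ t : A ⊗[k] A,
      f ((TensorProduct.lid k A) (TensorProduct.map g LinearMap.id t))
        = LinearMap.mul' k k (TensorProduct.map g f t) := by
    intro t
    induction t using TensorProduct.induction_on with
    | zero => simp
    | tmul a b => simp [LinearMap.mul'_apply, smul_eq_mul]
    | add x y hx hy => simp [map_add, hx, hy]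
  exact this _

lemma counit_conv {C : Type u} [AddCommGroup C] [Module k C] [Coalgebra k C]
    (f : C →ₗ[k] k) :
    LinearMap.mul' k k ∘ₗ TensorProduct.map (Coalgebra.counit (R := k) (A := C)) f
        ∘ₗ Coalgebra.comul (R := k) (A := C) = f := by
  apply LinearMap.ext; intro c
  simp only [LinearMap.comp_apply]
  have h2 : TensorProduct.map (Coalgebra.counit (R := k) (A := C)) f
      = LinearMap.lTensor k f ∘ₗ (Coalgebra.counit (R := k)).rTensor C := by
    apply TensorProduct.ext'
    intro x y
    simp
  rw [h2, LinearMap.comp_apply, Coalgebra.rTensor_counit_comul]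
  simp [LinearMap.mul'_apply]

lemma map_mul_mul_comp_tttc :
    TensorProduct.map (LinearMap.mul' k A) (LinearMap.mul' k A)
        ∘ₗ (TensorProduct.tensorTensorTensorComm k A A A A).toLinearMap
      = LinearMap.mul' k (A ⊗[k] A) := by
  apply TensorProduct.ext_fourfold'
  intro a b c d
  simp [LinearMap.mul'_apply, Algebra.TensorProduct.tmul_mul_tmul]

lemma comul_comp_mul :
    Coalgebra.comul (R := k) ∘ₗ LinearMap.mul' k A
      = TensorProduct.map (LinearMap.mul' k A) (LinearMap.mul' k A)
        ∘ₗ (TensorProduct.tensorTensorTensorComm k A A A A).toLinearMap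
        ∘ₗ TensorProduct.map (Coalgebra.comul (R := k)) (Coalgebra.comul (R := k)) := by
  apply TensorProduct.ext'
  intro a b
  simp only [LinearMap.comp_apply, TensorProduct.map_tmul, LinearMap.mul'_apply]
  rw [← LinearMap.comp_apply
      (TensorProduct.map (LinearMap.mul' k A) (LinearMap.mul' k A)),
    map_mul_mul_comp_tttc]
  simp [LinearMap.mul'_apply, Bialgebra.comul_mul]

lemma tttc_push (G : A →ₗ[k] A)
    (hG : Coalgebra.comul (R := k) ∘ₗ G
        = TensorProduct.map G LinearMap.id ∘ₗ Coalgebra.comul (R := k)) :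
    (TensorProduct.tensorTensorTensorComm k A A A A).toLinearMap
        ∘ₗ TensorProduct.map (Coalgebra.comul (R := k)) (Coalgebra.comul (R := k))
        ∘ₗ TensorProduct.map G G
      = TensorProduct.map (TensorProduct.map G G) LinearMap.id
        ∘ₗ (TensorProduct.tensorTensorTensorComm k A A A A).toLinearMap
        ∘ₗ TensorProduct.map (Coalgebra.comul (R := k)) (Coalgebra.comul (R := k)) := by
  have h1 : TensorProduct.map (Coalgebra.comul (R := k)) (Coalgebra.comul (R := k))
        ∘ₗ TensorProduct.map G G
      = TensorProduct.map (TensorProduct.map G LinearMap.id)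
          (TensorProduct.map G LinearMap.id)
        ∘ₗ TensorProduct.map (Coalgebra.comul (R := k)) (Coalgebra.comul (R := k)) := by
    rw [← TensorProduct.map_comp, hG, TensorProduct.map_comp]
  have h2 : (TensorProduct.tensorTensorTensorComm k A A A A).toLinearMap
        ∘ₗ TensorProduct.map (TensorProduct.map G LinearMap.id)
            (TensorProduct.map G LinearMap.id)
      = TensorProduct.map (TensorProduct.map G G) LinearMap.id
        ∘ₗ (TensorProduct.tensorTensorTensorComm k A A A A).toLinearMap := by
    apply TensorProduct.ext_fourfold'
    intro a b c d
    simp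
  rw [h1, ← LinearMap.comp_assoc, h2, LinearMap.comp_assoc]

lemma key_r (r : A ⊗[k] A →ₗ[k] k) (Y Yinv : A →ₗ[k] k)
    (hY1 : convA Y Yinv = Coalgebra.counit)
    (hcocycle : r = cocycleRHS Y Yinv) :
    r ∘ₗ TensorProduct.map (iotaY Y) (iotaY Y) = Y ∘ₗ LinearMap.mul' k A := by
  have hP : (LinearMap.mul' k k ∘ₗ TensorProduct.map Yinv Yinv)
        ∘ₗ TensorProduct.map (iotaY Y) (iotaY Y)
      = Coalgebra.counit (R := k) (A := A ⊗[k] A) := by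
    rw [LinearMap.comp_assoc, ← TensorProduct.map_comp, comp_iotaY, hY1]
    apply TensorProduct.ext'; intro a b
    simp [LinearMap.mul'_apply, mul_comm]
  apply LinearMap.ext; intro t
  rw [hcocycle, cocycleRHS]
  simp only [LinearMap.comp_apply, LinearEquiv.coe_coe]
  have hp := LinearMap.congr_fun
    (tttc_push (iotaY Y) (comul_comp_iotaY Y)) t
  simp only [LinearMap.comp_apply, LinearEquiv.coe_coe] at hp
  rw [hp]
  rw [← LinearMap.comp_apply (TensorProduct.map _ _), ← TensorProduct.map_comp, hP,
    LinearMap.comp_id]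
  have hc := LinearMap.congr_fun (counit_conv (C := A ⊗[k] A) (Y ∘ₗ LinearMap.mul' k A)) t
  simp only [LinearMap.comp_apply] at hc
  exact hc

lemma mulR_iota (r : A ⊗[k] A →ₗ[k] k) (Y Yinv : A →ₗ[k] k)
    (hY1 : convA Y Yinv = Coalgebra.counit)
    (hcocycle : r = cocycleRHS Y Yinv) :
    mulRTwist r ∘ₗ TensorProduct.map (iotaY Y) (iotaY Y)
      = iotaY Y ∘ₗ LinearMap.mul' k A := by
  apply LinearMap.ext; intro t
  simp only [mulRTwist, LinearMap.comp_apply, LinearEquiv.coe_coe]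
  have hp := LinearMap.congr_fun
    (tttc_push (iotaY Y) (comul_comp_iotaY Y)) t
  simp only [LinearMap.comp_apply, LinearEquiv.coe_coe] at hp
  rw [hp]
  rw [← LinearMap.comp_apply (TensorProduct.map r _), ← TensorProduct.map_comp,
    key_r r Y Yinv hY1 hcocycle, LinearMap.comp_id]
  rw [iotaY]
  simp only [LinearMap.comp_apply, LinearEquiv.coe_coe]
  have hm := LinearMap.congr_fun (comul_comp_mul (k := k) (A := A)) t
  simp only [LinearMap.comp_apply, LinearEquiv.coe_coe] at hm
  rw [hm]
  rw [← LinearMap.comp_apply (TensorProduct.map Y LinearMap.id),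
    ← TensorProduct.map_comp, LinearMap.id_comp]

theorem statement13 (r : A ⊗[k] A →ₗ[k] k)
    -- co-quasitriangularity of `r`:
    (hconv : ∃ rinv : A ⊗[k] A →ₗ[k] k,
      convAA r rinv = Coalgebra.counit ∧ convAA rinv r = Coalgebra.counit)
    (h1 : mulRTwist r = mulRTwist' r)
    (h2 : r ∘ₗ TensorProduct.map (LinearMap.mul' k A) LinearMap.id
        = LinearMap.mul' k k ∘ₗ TensorProduct.map r r
            ∘ₗ (TensorProduct.tensorTensorTensorComm k A A A A).toLinearMap
            ∘ₗ TensorProduct.map LinearMap.id (Coalgebra.comul (R := k)))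
    (h3 : r ∘ₗ TensorProduct.map LinearMap.id (LinearMap.mul' k A)
        = LinearMap.mul' k k ∘ₗ TensorProduct.map r r
            ∘ₗ (TensorProduct.tensorTensorTensorComm k A A A A).toLinearMap
            ∘ₗ TensorProduct.map (Coalgebra.comul (R := k))
                (TensorProduct.comm k A A).toLinearMap)
    -- `Y` is an invertible element of the dual (convolution) algebra, with inverse `Yinv`:
    (Y Yinv : A →ₗ[k] k)
    (hY : convA Y Yinv = Coalgebra.counit ∧ convA Yinv Y = Coalgebra.counit)
    -- the cocycle identity `r = (Y⁻¹ ⊗ Y⁻¹) Δ(Y)`: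
    (hcocycle : r = cocycleRHS Y Yinv) :
    -- `ι_Y : A → {}^R A` is an isomorphism of algebras:
    Function.Bijective (iotaY Y)
      ∧ (∀ φ ψ : A, iotaY Y (φ * ψ) = mulRTwist r (iotaY Y φ ⊗ₜ[k] iotaY Y ψ))
      ∧ iotaY Y (1 : A) = 1 := by
  obtain ⟨hY1, hY2⟩ := hY
  obtain ⟨rinv, hc1, -⟩ := hconv
  refine ⟨?_, ?_, ?_⟩
  · have e1 : iotaY Y ∘ₗ iotaY Yinv = LinearMap.id := by
      rw [iotaY_comp, hY2, iotaY_counit]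
    have e2 : iotaY Yinv ∘ₗ iotaY Y = LinearMap.id := by
      rw [iotaY_comp, hY1, iotaY_counit]
    have l : Function.LeftInverse (iotaY Yinv) (iotaY Y) := fun a => by
      simpa using LinearMap.congr_fun e2 a
    have rr : Function.RightInverse (iotaY Yinv) (iotaY Y) := fun a => by
      simpa using LinearMap.congr_fun e1 a
    exact ⟨l.injective, rr.surjective⟩
  · intro φ ψ
    have := LinearMap.congr_fun (mulR_iota r Y Yinv hY1 hcocycle) (φ ⊗ₜ[k] ψ)
    simp only [LinearMap.comp_apply, TensorProduct.map_tmul, LinearMap.mul'_apply] at this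
    exact this.symm
  · -- unitality; first show `Y 1 = 1`.
    have e1 : Y 1 * Yinv 1 = 1 := by
      have h := LinearMap.congr_fun hY1 (1 : A)
      simpa [convA, Bialgebra.comul_one, Algebra.TensorProduct.one_def,
        LinearMap.mul'_apply] using h
    have e2 : Yinv 1 * Y 1 = 1 := by
      have h := LinearMap.congr_fun hY2 (1 : A)
      simpa [convA, Bialgebra.comul_one, Algebra.TensorProduct.one_def,
        LinearMap.mul'_apply] using h
    have e3 : r ((1 : A) ⊗ₜ[k] (1 : A)) = Yinv 1 * Yinv 1 * Y 1 := by
      rw [hcocycle]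
      simp [cocycleRHS, Bialgebra.comul_one, Algebra.TensorProduct.one_def,
        LinearMap.mul'_apply, mul_assoc]
    have e4 : r ((1 : A) ⊗ₜ[k] (1 : A))
        = r ((1 : A) ⊗ₜ[k] (1 : A)) * r ((1 : A) ⊗ₜ[k] (1 : A)) := by
      have h := LinearMap.congr_fun h2 (((1 : A) ⊗ₜ[k] (1 : A)) ⊗ₜ[k] (1 : A))
      simpa [Bialgebra.comul_one, Algebra.TensorProduct.one_def,
        LinearMap.mul'_apply] using h
    have e5 : r ((1 : A) ⊗ₜ[k] (1 : A)) * rinv ((1 : A) ⊗ₜ[k] (1 : A)) = 1 := by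
      have h := LinearMap.congr_fun hc1 ((1 : A) ⊗ₜ[k] (1 : A))
      simpa [convAA, Bialgebra.comul_one, Algebra.TensorProduct.one_def,
        LinearMap.mul'_apply] using h
    have hr0 : r ((1 : A) ⊗ₜ[k] (1 : A)) ≠ 0 := by
      intro h; rw [h, zero_mul] at e5; exact zero_ne_one e5
    have hr1 : r ((1 : A) ⊗ₜ[k] (1 : A)) = 1 := by
      have h' : r ((1 : A) ⊗ₜ[k] (1 : A)) * 1
          = r ((1 : A) ⊗ₜ[k] (1 : A)) * r ((1 : A) ⊗ₜ[k] (1 : A)) := by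
        rw [mul_one]; exact e4
      exact (mul_left_cancel₀ hr0 h').symm
    have hYinv1 : Yinv 1 = 1 := by
      have : Yinv 1 * (Yinv 1 * Y 1) = 1 := by rw [← mul_assoc, ← e3, hr1]
      rwa [e2, mul_one] at this
    have hY1' : Y 1 = 1 := by rw [hYinv1, one_mul] at e2; exact e2
    simp [iotaY, Bialgebra.comul_one, Algebra.TensorProduct.one_def, hY1']
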